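/- Let $g_n(z) = L_n z + p_n(z)$ be a sequence of special triangular automorphisms of $\mathbb{C}^d$ where: (a) $(L_n)$ are lower triangular linear automorphisms with $\|L_{n,m}\| \le c\lambda^{n-m}$ for all $n\ge m\ge 0$, with $c>0$ and $0<\lambda<1$; (b) $(p_n)$ is a bounded sequence of strictly triangular polynomial maps with $p_n(0)=0$ and $Dp_n(0)=0$. Then the family of polynomial maps $\{\lambda^{-n} g_{n,0} : n\in\mathbb{N}\}$ is bounded (uniformly bounded degrees and coefficients), where $g_{n,0} = g_{n-1}\circ\cdots\circ g_0$. -/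

import Mathlib

/-- The operator norm of a `d × d` complex matrix acting on `ℂ^d` with the max-norm. -/
noncomputable def opN {d : ℕ} (M : Matrix (Fin d) (Fin d) ℂ) : ℝ :=
  ‖LinearMap.toContinuousLinearMap (Matrix.mulVecLin M)‖

/-- `Lprod L m ℓ = L_{m+ℓ-1} ⋯ L_m`, i.e. the transition matrix `L_{m+ℓ, m}`. -/
noncomputable def Lprod {d : ℕ} (L : ℕ → Matrix (Fin d) (Fin d) ℂ) (m : ℕ) :
    ℕ → Matrix (Fin d) (Fin d) ℂ
  | 0 => 1
  | (ℓ + 1) => L (m + ℓ) * Lprod L m ℓ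

/-- The polynomial map representing the composition `g_{n,0} = g_{n-1} ∘ ⋯ ∘ g_0`,
where `g_n` is given by the tuple of polynomials `G n`. -/
noncomputable def compSeq {d : ℕ} (G : ℕ → Fin d → MvPolynomial (Fin d) ℂ) :
    ℕ → Fin d → MvPolynomial (Fin d) ℂ
  | 0 => fun j => MvPolynomial.X j
  | (n + 1) => fun j => MvPolynomial.bind₁ (compSeq G n) (G n j)

section NNAux
open MvPolynomial Finset

/-- The ℓ¹-norm of the coefficients of a multivariate polynomial. -/
noncomputable def nn {d : ℕ} (P : MvPolynomial (Fin d) ℂ) : NNReal :=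
  ∑ m ∈ P.support, ‖P.coeff m‖₊

variable {d : ℕ}

lemma nn_eq_sum {P : MvPolynomial (Fin d) ℂ} {S : Finset (Fin d →₀ ℕ)}
    (h : P.support ⊆ S) : ∑ m ∈ S, ‖P.coeff m‖₊ = nn P := by
  refine (Finset.sum_subset h ?_).symm
  intro m _ hm
  simp [MvPolynomial.notMem_support_iff.mp hm]

lemma nn_le_sum {P : MvPolynomial (Fin d) ℂ} {S : Finset (Fin d →₀ ℕ)}
    (h : ∀ m, P.coeff m ≠ 0 → m ∈ S) : nn P ≤ ∑ m ∈ S, ‖P.coeff m‖₊ := by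
  refine le_of_eq (nn_eq_sum ?_).symm
  intro m hm
  exact h m (MvPolynomial.mem_support_iff.mp hm)

lemma nnCoeff_le (P : MvPolynomial (Fin d) ℂ) (m : Fin d →₀ ℕ) : ‖P.coeff m‖₊ ≤ nn P := by
  by_cases hm : m ∈ P.support
  · exact Finset.single_le_sum (f := fun m => ‖P.coeff m‖₊) (fun _ _ => zero_le) hm
  · simp [MvPolynomial.notMem_support_iff.mp hm]

lemma nn_zero : nn (0 : MvPolynomial (Fin d) ℂ) = 0 := by simp [nn]

lemma nn_add_le (P Q : MvPolynomial (Fin d) ℂ) : nn (P + Q) ≤ nn P + nn Q := by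
  have h1 : nn (P + Q) ≤ ∑ m ∈ P.support ∪ Q.support, ‖(P + Q).coeff m‖₊ := by
    apply nn_le_sum
    intro m hm
    rw [Finset.mem_union]
    by_contra hc
    push_neg at hc
    simp only [Finset.mem_union, MvPolynomial.mem_support_iff, not_not, not_or] at hc
    simp [MvPolynomial.coeff_add, hc.1, hc.2] at hm
  refine h1.trans ?_
  have h2 : ∀ m ∈ P.support ∪ Q.support, ‖(P + Q).coeff m‖₊ ≤ ‖P.coeff m‖₊ + ‖Q.coeff m‖₊ := by
    intro m _; rw [MvPolynomial.coeff_add]; exact nnnorm_add_le _ _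
  refine (Finset.sum_le_sum h2).trans ?_
  rw [Finset.sum_add_distrib,
    nn_eq_sum (Finset.subset_union_left),
    nn_eq_sum (Finset.subset_union_right)]

lemma nn_sum_le {ι : Type*} (s : Finset ι) (f : ι → MvPolynomial (Fin d) ℂ) :
    nn (∑ i ∈ s, f i) ≤ ∑ i ∈ s, nn (f i) := by
  induction s using Finset.cons_induction with
  | empty => simp [nn_zero]
  | cons a s ha ih =>
    rw [Finset.sum_cons, Finset.sum_cons]
    exact (nn_add_le _ _).trans (by gcongr)

lemma nn_mul_le (P Q : MvPolynomial (Fin d) ℂ) : nn (P * Q) ≤ nn P * nn Q := by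
  classical
  have h1 : nn (P * Q) ≤ ∑ m ∈ (P * Q).support,
      ∑ uv ∈ Finset.HasAntidiagonal.antidiagonal m, ‖P.coeff uv.1‖₊ * ‖Q.coeff uv.2‖₊ := by
    refine Finset.sum_le_sum ?_
    intro m _
    rw [MvPolynomial.coeff_mul]
    exact (nnnorm_sum_le _ _).trans (Finset.sum_le_sum fun uv _ => nnnorm_mul_le _ _)
  refine h1.trans ?_
  rw [← Finset.sum_biUnion]
  · refine (Finset.sum_le_sum_of_ne_zero (t := P.support ×ˢ Q.support) ?_).trans ?_
    · intro uv _ hne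
      have h1 : P.coeff uv.1 ≠ 0 := by
        intro h; simp [h] at hne
      have h2 : Q.coeff uv.2 ≠ 0 := by
        intro h; simp [h] at hne
      exact Finset.mem_product.mpr ⟨MvPolynomial.mem_support_iff.mpr h1,
        MvPolynomial.mem_support_iff.mpr h2⟩
    · rw [Finset.sum_product]
      rw [nn, nn, Finset.sum_mul_sum]
  · intro x _ y _ hxy
    apply Finset.disjoint_left.mpr
    intro uv h1 h2
    rw [Finset.HasAntidiagonal.mem_antidiagonal] at h1 h2
    exact hxy (h1 ▸ h2)

lemma nn_one : nn (1 : MvPolynomial (Fin d) ℂ) ≤ 1 := by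
  have : nn (1 : MvPolynomial (Fin d) ℂ) ≤
      ∑ m ∈ {(0 : Fin d →₀ ℕ)}, ‖(1 : MvPolynomial (Fin d) ℂ).coeff m‖₊ := by
    apply nn_le_sum
    intro m hm
    rw [Finset.mem_singleton]
    by_contra h
    rw [MvPolynomial.coeff_one, if_neg (Ne.symm h)] at hm
    exact hm rfl
  simpa [MvPolynomial.coeff_one] using this

lemma nn_C (a : ℂ) : nn (MvPolynomial.C (σ := Fin d) a) ≤ ‖a‖₊ := by
  have : nn (MvPolynomial.C (σ := Fin d) a) ≤
      ∑ m ∈ {(0 : Fin d →₀ ℕ)}, ‖(MvPolynomial.C (σ := Fin d) a).coeff m‖₊ := by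
    apply nn_le_sum
    intro m hm
    rw [Finset.mem_singleton]
    by_contra h
    rw [MvPolynomial.coeff_C, if_neg (Ne.symm h)] at hm
    exact hm rfl
  simpa [MvPolynomial.coeff_C] using this

lemma nn_X (i : Fin d) : nn (MvPolynomial.X (R := ℂ) i) ≤ 1 := by
  have : nn (MvPolynomial.X (R := ℂ) i) ≤
      ∑ m ∈ {Finsupp.single i 1}, ‖(MvPolynomial.X (R := ℂ) i).coeff m‖₊ := by
    apply nn_le_sum
    intro m hm
    rw [Finset.mem_singleton]
    by_contra h
    rw [MvPolynomial.coeff_X', if_neg (Ne.symm h)] at hm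
    exact hm rfl
  simpa [MvPolynomial.coeff_X'] using this

lemma nn_pow_le (P : MvPolynomial (Fin d) ℂ) (k : ℕ) : nn (P ^ k) ≤ nn P ^ k := by
  induction k with
  | zero => simpa using nn_one
  | succ k ih =>
    rw [pow_succ, pow_succ]
    exact (nn_mul_le _ _).trans (by gcongr)

lemma nn_prod_le {ι : Type*} (s : Finset ι) (f : ι → MvPolynomial (Fin d) ℂ) :
    nn (∏ i ∈ s, f i) ≤ ∏ i ∈ s, nn (f i) := by
  induction s using Finset.cons_induction with
  | empty => simpa using nn_one
  | cons a s ha ih =>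
    rw [Finset.prod_cons, Finset.prod_cons]
    exact (nn_mul_le _ _).trans (by gcongr)

lemma nn_bind₁_le (f : Fin d → MvPolynomial (Fin d) ℂ) (q : MvPolynomial (Fin d) ℂ) :
    nn (MvPolynomial.bind₁ f q) ≤
      ∑ μ ∈ q.support, ‖q.coeff μ‖₊ * ∏ k ∈ μ.support, nn (f k) ^ μ k := by
  conv_lhs => rw [MvPolynomial.as_sum q, map_sum]
  refine (nn_sum_le _ _).trans (Finset.sum_le_sum ?_)
  intro μ _
  rw [MvPolynomial.bind₁_monomial]
  refine (nn_mul_le _ _).trans ?_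
  refine mul_le_mul' (nn_C _) ?_
  refine (nn_prod_le _ _).trans (Finset.prod_le_prod' ?_)
  intro k _
  exact nn_pow_le _ _

lemma entry_le_opN (M : Matrix (Fin d) (Fin d) ℂ) (j i : Fin d) :
    ‖M j i‖ ≤ opN M := by
  have h1 : ‖M j i‖ = ‖M.mulVec (Pi.single i 1) j‖ := by
    rw [Matrix.mulVec_single]; simp
  rw [h1]
  refine (norm_le_pi_norm _ j).trans ?_
  have h2 : M.mulVec (Pi.single i 1) =
      (LinearMap.toContinuousLinearMap (Matrix.mulVecLin M)) (Pi.single i 1) := rfl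
  rw [h2]
  refine (ContinuousLinearMap.le_opNorm _ _).trans ?_
  rw [Pi.norm_single]
  simp [opN]

lemma Lprod_tri (L : ℕ → Matrix (Fin d) (Fin d) ℂ)
    (hLtri : ∀ n, ∀ i j : Fin d, i < j → L n i j = 0) (m ℓ : ℕ) :
    ∀ i j : Fin d, i < j → Lprod L m ℓ i j = 0 := by
  induction ℓ with
  | zero =>
    intro i j hij
    exact Matrix.one_apply_ne hij.ne
  | succ ℓ ih =>
    intro i j hij
    show (L (m + ℓ) * Lprod L m ℓ) i j = 0
    rw [Matrix.mul_apply]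
    refine Finset.sum_eq_zero fun k _ => ?_
    rcases lt_or_ge i k with h | h
    · rw [hLtri _ _ _ h, zero_mul]
    · rw [ih _ _ (h.trans_lt hij), mul_zero]

lemma card_support_le {E : ℕ} (P : MvPolynomial (Fin d) ℂ) (h : P.totalDegree ≤ E) :
    P.support.card ≤ (E + 1) ^ d := by
  classical
  have hb : ∀ μ ∈ P.support, ∀ i : Fin d, μ i ≤ E := by
    intro μ hμ i
    refine le_trans ?_ (le_trans (MvPolynomial.le_totalDegree hμ) h)
    by_cases hi : μ i = 0
    · simp [hi]
    · exact Finset.single_le_sum (f := fun k => μ k) (fun _ _ => Nat.zero_le _)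
        (Finsupp.mem_support_iff.mpr hi)
  have hcard : P.support.card ≤ (Finset.univ : Finset (Fin d → Fin (E + 1))).card := by
    refine Finset.card_le_card_of_injOn
      (fun (μ : Fin d →₀ ℕ) (i : Fin d) => (⟨min (μ i) E, by omega⟩ : Fin (E + 1)))
      (fun _ _ => Finset.mem_univ _) ?_
    intro μ hμ ν hν hfn
    ext i
    have h1 := congrFun hfn i
    simp only [Fin.mk.injEq] at h1
    rw [min_eq_left (hb μ hμ i), min_eq_left (hb ν hν i)] at h1
    exact h1
  refine hcard.trans ?_
  rw [Finset.card_univ, Fintype.card_fun]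
  simp

lemma totalDegree_bind₁_le {D E : ℕ} (f : Fin d → MvPolynomial (Fin d) ℂ)
    (q : MvPolynomial (Fin d) ℂ) (hq : q.totalDegree ≤ D)
    (hf : ∀ μ ∈ q.support, ∀ k ∈ μ.support, (f k).totalDegree ≤ E) :
    (MvPolynomial.bind₁ f q).totalDegree ≤ D * E := by
  conv_lhs => rw [MvPolynomial.as_sum q, map_sum]
  refine (MvPolynomial.totalDegree_finset_sum _ _).trans (Finset.sup_le ?_)
  intro μ hμ
  rw [MvPolynomial.bind₁_monomial]
  refine (MvPolynomial.totalDegree_mul _ _).trans ?_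
  rw [MvPolynomial.totalDegree_C, zero_add]
  refine (MvPolynomial.totalDegree_finset_prod _ _).trans ?_
  have h1 : ∀ k ∈ μ.support, ((f k) ^ μ k).totalDegree ≤ μ k * E := by
    intro k hk
    exact (MvPolynomial.totalDegree_pow _ _).trans (Nat.mul_le_mul_left _ (hf μ hμ k hk))
  refine (Finset.sum_le_sum h1).trans ?_
  rw [← Finset.sum_mul]
  exact Nat.mul_le_mul_right _ ((MvPolynomial.le_totalDegree hμ).trans hq)

/-- The unrolled composition formula. -/
lemma compSeq_formula (L : ℕ → Matrix (Fin d) (Fin d) ℂ)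
    (p : ℕ → Fin d → MvPolynomial (Fin d) ℂ) (n : ℕ) (j : Fin d) :
    compSeq (fun n j => (∑ i : Fin d, MvPolynomial.C (L n j i) * MvPolynomial.X i) + p n j) n j
      = (∑ i : Fin d, MvPolynomial.C (Lprod L 0 n j i) * MvPolynomial.X i)
        + ∑ m ∈ Finset.range n, ∑ i : Fin d,
            MvPolynomial.C (Lprod L (m + 1) (n - 1 - m) j i) *
              MvPolynomial.bind₁
                (compSeq (fun n j =>
                  (∑ i : Fin d, MvPolynomial.C (L n j i) * MvPolynomial.X i) + p n j) m)
                (p m i) := by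
  set G := fun n (j : Fin d) =>
    (∑ i : Fin d, MvPolynomial.C (L n j i) * MvPolynomial.X i) + p n j with hG
  induction n generalizing j with
  | zero =>
    show MvPolynomial.X j = _
    simp only [Finset.range_zero, Finset.sum_empty, add_zero]
    have : ∀ i : Fin d, MvPolynomial.C (Lprod L 0 0 j i) * MvPolynomial.X (R := ℂ) i
        = if j = i then MvPolynomial.X i else 0 := by
      intro i
      show MvPolynomial.C ((1 : Matrix (Fin d) (Fin d) ℂ) j i) * MvPolynomial.X i = _
      rw [Matrix.one_apply]
      split <;> simp
    rw [Finset.sum_congr rfl (fun i _ => this i), Finset.sum_ite_eq]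
    simp
  | succ n ih =>
    have step : compSeq G (n + 1) j = MvPolynomial.bind₁ (compSeq G n) (G n j) := rfl
    rw [step, hG]
    simp only [map_add, map_sum, map_mul, MvPolynomial.bind₁_C_right,
      MvPolynomial.bind₁_X_right]
    have expand : ∀ i : Fin d, MvPolynomial.C (L n j i) * compSeq G n i
        = (∑ k : Fin d, MvPolynomial.C (L n j i) *
            (MvPolynomial.C (Lprod L 0 n i k) * MvPolynomial.X k))
          + ∑ m ∈ Finset.range n, ∑ k : Fin d,
              MvPolynomial.C (L n j i) * (MvPolynomial.C (Lprod L (m + 1) (n - 1 - m) i k) *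
                MvPolynomial.bind₁ (compSeq G m) (p m k)) := by
      intro i
      rw [ih i, mul_add, Finset.mul_sum]
      congr 1
      rw [Finset.mul_sum]
      refine Finset.sum_congr rfl fun m _ => (Finset.mul_sum _ _ _)
    rw [Finset.sum_congr rfl (fun i _ => expand i), Finset.sum_add_distrib]
    have lin : (∑ i : Fin d, ∑ k : Fin d, MvPolynomial.C (L n j i) *
        (MvPolynomial.C (Lprod L 0 n i k) * MvPolynomial.X k))
        = ∑ k : Fin d, MvPolynomial.C (Lprod L 0 (n + 1) j k) * MvPolynomial.X k := by
      rw [Finset.sum_comm]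
      refine Finset.sum_congr rfl fun k _ => ?_
      have : Lprod L 0 (n + 1) j k = ∑ i : Fin d, L n j i * Lprod L 0 n i k := by
        show (L (0 + n) * Lprod L 0 n) j k = _
        rw [Matrix.mul_apply]
        simp
      rw [this, map_sum, Finset.sum_mul]
      refine Finset.sum_congr rfl fun i _ => ?_
      rw [MvPolynomial.C_mul, mul_assoc]
    have quad : (∑ i : Fin d, ∑ m ∈ Finset.range n, ∑ k : Fin d,
        MvPolynomial.C (L n j i) * (MvPolynomial.C (Lprod L (m + 1) (n - 1 - m) i k) *
          MvPolynomial.bind₁ (compSeq G m) (p m k)))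
        = ∑ m ∈ Finset.range n, ∑ k : Fin d,
            MvPolynomial.C (Lprod L (m + 1) (n + 1 - 1 - m) j k) *
              MvPolynomial.bind₁ (compSeq G m) (p m k) := by
      rw [Finset.sum_comm]
      refine Finset.sum_congr rfl fun m hm => ?_
      rw [Finset.mem_range] at hm
      rw [Finset.sum_comm]
      refine Finset.sum_congr rfl fun k _ => ?_
      have harith : n + 1 - 1 - m = (n - 1 - m) + 1 := by omega
      have harith2 : (m + 1) + (n - 1 - m) = n := by omega
      have : Lprod L (m + 1) (n + 1 - 1 - m) j k
          = ∑ i : Fin d, L n j i * Lprod L (m + 1) (n - 1 - m) i k := by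
        rw [harith]
        show (L ((m + 1) + (n - 1 - m)) * Lprod L (m + 1) (n - 1 - m)) j k = _
        rw [harith2, Matrix.mul_apply]
      rw [this, map_sum, Finset.sum_mul]
      refine Finset.sum_congr rfl fun i _ => ?_
      rw [MvPolynomial.C_mul, mul_assoc]
    rw [lin, quad]
    have newterm : MvPolynomial.bind₁ (compSeq G n) (p n j)
        = ∑ k : Fin d, MvPolynomial.C (Lprod L (n + 1) (n + 1 - 1 - n) j k) *
            MvPolynomial.bind₁ (compSeq G n) (p n k) := by
      have h0 : n + 1 - 1 - n = 0 := by omega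
      rw [h0]
      have h1 : ∀ k : Fin d, MvPolynomial.C (Lprod L (n + 1) 0 j k) *
          MvPolynomial.bind₁ (compSeq G n) (p n k)
          = if j = k then MvPolynomial.bind₁ (compSeq G n) (p n k) else 0 := by
        intro k
        show MvPolynomial.C ((1 : Matrix (Fin d) (Fin d) ℂ) j k) * _ = _
        rw [Matrix.one_apply]
        split <;> simp
      rw [Finset.sum_congr rfl (fun k _ => h1 k), Finset.sum_ite_eq]
      simp
    rw [newterm, Finset.sum_range_succ]
    ring

end NNAux

theorem stmt16 (d : ℕ) (L : ℕ → Matrix (Fin d) (Fin d) ℂ) (c lam : ℝ)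
    (hc : 0 < c) (hlam0 : 0 < lam) (hlam1 : lam < 1)
    (hLtri : ∀ n, ∀ i j : Fin d, i < j → L n i j = 0)
    (hLdiag : ∀ n, ∀ i : Fin d, L n i i ≠ 0)
    (hLnorm : ∀ m ℓ : ℕ, opN (Lprod L m ℓ) ≤ c * lam ^ ℓ)
    (p : ℕ → Fin d → MvPolynomial (Fin d) ℂ)
    (hpstrict : ∀ n, ∀ j : Fin d, ∀ m ∈ (p n j).support,
      (∀ i : Fin d, j ≤ i → m i = 0) ∧ 2 ≤ m.sum (fun _ e => e))
    (hpbdd : ∃ (D : ℕ) (M : ℝ), ∀ n, ∀ j : Fin d,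
      (p n j).totalDegree ≤ D ∧ ∀ m : Fin d →₀ ℕ, ‖MvPolynomial.coeff m (p n j)‖ ≤ M) :
    ∃ (D : ℕ) (M : ℝ), ∀ n, ∀ j : Fin d,
      (compSeq (fun n j =>
          (∑ i : Fin d, MvPolynomial.C (L n j i) * MvPolynomial.X i) + p n j) n j).totalDegree ≤ D ∧
      ∀ m : Fin d →₀ ℕ,
        ‖MvPolynomial.coeff m (compSeq (fun n j =>
          (∑ i : Fin d, MvPolynomial.C (L n j i) * MvPolynomial.X i) + p n j) n j)‖
          ≤ M * lam ^ n := by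
  classical
  obtain ⟨D, Mp, hp⟩ := hpbdd
  set G : ℕ → Fin d → MvPolynomial (Fin d) ℂ :=
    fun n j => (∑ i : Fin d, MvPolynomial.C (L n j i) * MvPolynomial.X i) + p n j with hG
  set F : ℕ → Fin d → MvPolynomial (Fin d) ℂ := compSeq G with hF
  have hstep : ∀ n (j : Fin d), F (n + 1) j
      = (∑ i : Fin d, MvPolynomial.C (L n j i) * F n i)
        + MvPolynomial.bind₁ (F n) (p n j) := by
    intro n j
    show MvPolynomial.bind₁ (compSeq G n) (G n j) = _
    rw [hG]
    simp only [map_add, map_sum, map_mul, MvPolynomial.bind₁_C_right,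
      MvPolynomial.bind₁_X_right]
    rfl
  -- strictness gives: exponents of `p n j` live on indices < j
  have hplt : ∀ n (j : Fin d), ∀ μ ∈ (p n j).support, ∀ k ∈ μ.support, (k : ℕ) < (j : ℕ) := by
    intro n j μ hμ k hk
    by_contra hc'
    push_neg at hc'
    have hjk : j ≤ k := by
      rw [Fin.le_def]; exact hc'
    exact (Finsupp.mem_support_iff.mp hk) ((hpstrict n j μ hμ).1 k hjk)
  -- Degree bound
  have hdeg : ∀ J : ℕ, ∃ E : ℕ, 1 ≤ E ∧ ∀ n, ∀ j : Fin d, (j : ℕ) < J →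
      (F n j).totalDegree ≤ E := by
    intro J
    induction J with
    | zero => exact ⟨1, le_refl _, fun n j hj => absurd hj (Nat.not_lt_zero _)⟩
    | succ J ih =>
      obtain ⟨E, hE1, hE⟩ := ih
      refine ⟨max E (max 1 (D * E)), le_trans (le_max_left 1 (D * E)) (le_max_right _ _), ?_⟩
      intro n
      induction n with
      | zero =>
        intro j hj
        show (MvPolynomial.X (R := ℂ) j).totalDegree ≤ _
        rw [MvPolynomial.totalDegree_X]
        exact le_trans (le_max_left 1 (D * E)) (le_max_right _ _)
      | succ n ihn =>
        intro j hj
        rw [hstep n j]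
        refine (MvPolynomial.totalDegree_add _ _).trans (max_le ?_ ?_)
        · refine (MvPolynomial.totalDegree_finset_sum _ _).trans (Finset.sup_le ?_)
          intro i _
          rcases le_or_gt (i : ℕ) (j : ℕ) with h | h
          · refine (MvPolynomial.totalDegree_mul _ _).trans ?_
            rw [MvPolynomial.totalDegree_C, zero_add]
            exact ihn i (lt_of_le_of_lt h hj)
          · have hz : L n j i = 0 := hLtri n j i (Fin.lt_def.mpr h)
            rw [hz]
            simp
        · refine (totalDegree_bind₁_le _ _ (hp n j).1 ?_).trans
            (le_trans (le_max_right 1 (D * E)) (le_max_right _ _))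
          intro μ hμ k hk
          have hkJ : (k : ℕ) < J := lt_of_lt_of_le (hplt n j μ hμ k hk) (Nat.lt_succ_iff.mp hj)
          exact hE n k hkJ
  -- Coefficient bound
  set lamN : NNReal := ⟨lam, hlam0.le⟩ with hlamN
  set cN : NNReal := ⟨c, hc.le⟩ with hcN
  have hlamN1 : lamN < 1 := by
    rw [← NNReal.coe_lt_coe]
    exact hlam1
  have hlamN0 : lamN ≠ 0 := by
    intro h
    have := congrArg (NNReal.toReal) h
    simp only [NNReal.coe_zero] at this
    exact hlam0.ne' this
  set MpN : NNReal := Real.toNNReal Mp with hMpN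
  have hpcoeff : ∀ n (j : Fin d) μ, ‖(p n j).coeff μ‖₊ ≤ MpN := by
    intro n j μ
    rw [← NNReal.coe_le_coe]
    exact le_trans ((hp n j).2 μ) (Real.le_coe_toNNReal Mp)
  have hentry : ∀ m ℓ (j i : Fin d), ‖Lprod L m ℓ j i‖₊ ≤ cN * lamN ^ ℓ := by
    intro m ℓ j i
    rw [← NNReal.coe_le_coe]
    calc (‖Lprod L m ℓ j i‖₊ : ℝ) = ‖Lprod L m ℓ j i‖ := coe_nnnorm _
      _ ≤ c * lam ^ ℓ := (entry_le_opN _ j i).trans (hLnorm m ℓ)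
      _ = ((cN * lamN ^ ℓ : NNReal) : ℝ) := by
          rw [NNReal.coe_mul, NNReal.coe_pow]; rfl
  have hgeo : ∀ n : ℕ, (∑ m ∈ Finset.range n, lamN ^ m) ≤ (1 - lamN)⁻¹ :=
    fun n => (Summable.sum_le_tsum (Finset.range n) (fun _ _ => zero_le)
      (NNReal.hasSum_geometric hlamN1).summable).trans_eq (tsum_geometric_nnreal hlamN1)
  have hcoeff : ∀ J : ℕ, ∃ K : NNReal, 1 ≤ K ∧ ∀ n, ∀ j : Fin d, (j : ℕ) < J →
      nn (F n j) ≤ K * lamN ^ n := by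
    intro J
    induction J with
    | zero => exact ⟨1, le_refl _, fun n j hj => absurd hj (Nat.not_lt_zero _)⟩
    | succ J ih =>
      obtain ⟨K, hK1, hKb⟩ := ih
      set CC : NNReal := ((D + 1) ^ d : ℕ) * MpN * K ^ D with hCC
      have hbind : ∀ m, ∀ i : Fin d, (i : ℕ) ≤ J →
          nn (MvPolynomial.bind₁ (F m) (p m i)) ≤ CC * lamN ^ (2 * m) := by
        intro m i hi
        refine (nn_bind₁_le _ _).trans ?_
        have hterm : ∀ μ ∈ (p m i).support,
            ‖(p m i).coeff μ‖₊ * ∏ k ∈ μ.support, nn (F m k) ^ μ k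
              ≤ MpN * (K ^ D * lamN ^ (2 * m)) := by
          intro μ hμ
          refine mul_le_mul' (hpcoeff m i μ) ?_
          have h1 : ∀ k ∈ μ.support, nn (F m k) ^ μ k ≤ (K * lamN ^ m) ^ μ k := by
            intro k hk
            refine pow_le_pow_left₀ (zero_le) ?_ _
            exact hKb m k (lt_of_lt_of_le (hplt m i μ hμ k hk) hi)
          refine (Finset.prod_le_prod' h1).trans ?_
          rw [Finset.prod_pow_eq_pow_sum]
          have hs2 : 2 ≤ ∑ k ∈ μ.support, μ k := (hpstrict m i μ hμ).2
          have hsD : (∑ k ∈ μ.support, μ k) ≤ D :=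
            le_trans (MvPolynomial.le_totalDegree hμ) (hp m i).1
          calc (K * lamN ^ m) ^ (∑ k ∈ μ.support, μ k)
              = K ^ (∑ k ∈ μ.support, μ k) * (lamN ^ m) ^ (∑ k ∈ μ.support, μ k) := mul_pow _ _ _
            _ ≤ K ^ D * lamN ^ (2 * m) := by
                refine mul_le_mul' (pow_le_pow_right₀ hK1 hsD) ?_
                rw [← pow_mul]
                refine pow_le_pow_of_le_one (zero_le) hlamN1.le ?_
                calc 2 * m = m * 2 := Nat.mul_comm _ _
                  _ ≤ m * (∑ k ∈ μ.support, μ k) := Nat.mul_le_mul_left m hs2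
        refine (Finset.sum_le_sum hterm).trans ?_
        rw [Finset.sum_const, nsmul_eq_mul]
        calc ((p m i).support.card : NNReal) * (MpN * (K ^ D * lamN ^ (2 * m)))
            ≤ (((D + 1) ^ d : ℕ) : NNReal) * (MpN * (K ^ D * lamN ^ (2 * m))) := by
              gcongr
              exact_mod_cast card_support_le (p m i) (hp m i).1
          _ = CC * lamN ^ (2 * m) := by rw [hCC]; ring
      set Knew : NNReal := d * cN + d * cN * CC * lamN⁻¹ * (1 - lamN)⁻¹ with hKnew
      refine ⟨max K (max 1 Knew), le_trans (le_max_left 1 Knew) (le_max_right _ _), ?_⟩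
      intro n j hj
      have hform := compSeq_formula L p n j
      rw [← hG] at hform
      have main : nn (F n j) ≤ Knew * lamN ^ n := by
        rw [hF, hform]
        refine le_trans (nn_add_le _ _) ?_
        have part1 : nn (∑ i : Fin d, MvPolynomial.C (Lprod L 0 n j i) * MvPolynomial.X i)
            ≤ d * cN * lamN ^ n := by
          refine (nn_sum_le _ _).trans ?_
          have h1 : ∀ i ∈ (Finset.univ : Finset (Fin d)),
              nn (MvPolynomial.C (Lprod L 0 n j i) * MvPolynomial.X i) ≤ cN * lamN ^ n := by
            intro i _
            refine (nn_mul_le _ _).trans ?_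
            calc nn (MvPolynomial.C (Lprod L 0 n j i)) * nn (MvPolynomial.X i)
                ≤ (cN * lamN ^ n) * 1 := mul_le_mul' ((nn_C _).trans (hentry 0 n j i)) (nn_X i)
              _ = cN * lamN ^ n := mul_one _
          refine (Finset.sum_le_sum h1).trans ?_
          rw [Finset.sum_const, Finset.card_univ, Fintype.card_fin, nsmul_eq_mul]
          exact le_of_eq (by ring)
        have part2 : nn (∑ m ∈ Finset.range n, ∑ i : Fin d,
            MvPolynomial.C (Lprod L (m + 1) (n - 1 - m) j i) *
              MvPolynomial.bind₁ (compSeq G m) (p m i))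
            ≤ d * cN * CC * lamN⁻¹ * (1 - lamN)⁻¹ * lamN ^ n := by
          refine (nn_sum_le _ _).trans ?_
          have hinner : ∀ m ∈ Finset.range n,
              nn (∑ i : Fin d, MvPolynomial.C (Lprod L (m + 1) (n - 1 - m) j i) *
                MvPolynomial.bind₁ (compSeq G m) (p m i))
              ≤ d * cN * CC * (lamN⁻¹ * lamN ^ n * lamN ^ m) := by
            intro m hm
            rw [Finset.mem_range] at hm
            refine (nn_sum_le _ _).trans ?_
            have h2 : ∀ i ∈ (Finset.univ : Finset (Fin d)),
                nn (MvPolynomial.C (Lprod L (m + 1) (n - 1 - m) j i) *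
                  MvPolynomial.bind₁ (compSeq G m) (p m i))
                ≤ (cN * lamN ^ (n - 1 - m)) * (CC * lamN ^ (2 * m)) := by
              intro i _
              rcases le_or_gt (i : ℕ) (j : ℕ) with h | h
              · refine (nn_mul_le _ _).trans ?_
                refine mul_le_mul' ((nn_C _).trans (hentry (m + 1) (n - 1 - m) j i)) ?_
                exact hbind m i (le_trans h (Nat.lt_succ_iff.mp hj))
              · have hz : Lprod L (m + 1) (n - 1 - m) j i = 0 :=
                  Lprod_tri L hLtri (m + 1) (n - 1 - m) j i (Fin.lt_def.mpr h)
                rw [hz, map_zero, zero_mul, nn_zero]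
                exact zero_le
            refine (Finset.sum_le_sum h2).trans ?_
            rw [Finset.sum_const, Finset.card_univ, Fintype.card_fin, nsmul_eq_mul]
            have hexp : lamN ^ (n - 1 - m) * lamN ^ (2 * m) = lamN⁻¹ * lamN ^ n * lamN ^ m := by
              rw [← pow_add]
              have h3 : lamN ^ (n - 1 - m + 2 * m) * lamN = lamN ^ n * lamN ^ m := by
                rw [← pow_succ, ← pow_add]
                congr 1
                omega
              field_simp
              calc lamN ^ (n - 1 - m + 2 * m) * lamN = lamN ^ n * lamN ^ m := h3
                _ = lamN ^ n * lamN ^ m := rfl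
            refine le_of_eq ?_
            calc (d : NNReal) * (cN * lamN ^ (n - 1 - m) * (CC * lamN ^ (2 * m)))
                = d * cN * CC * (lamN ^ (n - 1 - m) * lamN ^ (2 * m)) := by ring
              _ = d * cN * CC * (lamN⁻¹ * lamN ^ n * lamN ^ m) := by rw [hexp]
          refine (Finset.sum_le_sum hinner).trans ?_
          have : (∑ m ∈ Finset.range n, (d : NNReal) * cN * CC * (lamN⁻¹ * lamN ^ n * lamN ^ m))
              = d * cN * CC * lamN⁻¹ * lamN ^ n * (∑ m ∈ Finset.range n, lamN ^ m) := by
            rw [Finset.mul_sum]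
            refine Finset.sum_congr rfl fun m _ => by ring
          rw [this]
          calc (d : NNReal) * cN * CC * lamN⁻¹ * lamN ^ n * (∑ m ∈ Finset.range n, lamN ^ m)
              ≤ d * cN * CC * lamN⁻¹ * lamN ^ n * (1 - lamN)⁻¹ := by
                gcongr
                exact hgeo n
            _ = d * cN * CC * lamN⁻¹ * (1 - lamN)⁻¹ * lamN ^ n := by ring
        calc nn (∑ i : Fin d, MvPolynomial.C (Lprod L 0 n j i) * MvPolynomial.X i)
              + nn (∑ m ∈ Finset.range n, ∑ i : Fin d,
                  MvPolynomial.C (Lprod L (m + 1) (n - 1 - m) j i) *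
                    MvPolynomial.bind₁ (compSeq G m) (p m i))
            ≤ d * cN * lamN ^ n + d * cN * CC * lamN⁻¹ * (1 - lamN)⁻¹ * lamN ^ n :=
              add_le_add part1 part2
          _ = Knew * lamN ^ n := by rw [hKnew]; ring
      refine main.trans ?_
      gcongr
      exact le_trans (le_max_right 1 Knew) (le_max_right _ _)
  obtain ⟨E, _, hE⟩ := hdeg d
  obtain ⟨K, _, hK⟩ := hcoeff d
  refine ⟨E, (K : ℝ), ?_⟩
  intro n j
  refine ⟨hE n j j.isLt, ?_⟩
  intro m
  have h1 : ‖(F n j).coeff m‖₊ ≤ K * lamN ^ n := (nnCoeff_le _ _).trans (hK n j j.isLt)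
  calc ‖MvPolynomial.coeff m (F n j)‖ = (‖(F n j).coeff m‖₊ : ℝ) := (coe_nnnorm _).symm
    _ ≤ ((K * lamN ^ n : NNReal) : ℝ) := NNReal.coe_le_coe.mpr h1
    _ = (K : ℝ) * lam ^ n := by rw [NNReal.coe_mul, NNReal.coe_pow]; rfl
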